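/- arXiv:2310.05282 — 2 statements merged into one kernel-verified Lean document; each statement's English description precedes it below -/
import Mathlib

section
/- For formal power series: if A(x) = Σ_{n≥0} (2n−1)!! xⁿ (with (−1)!! = 1) is the ordinary generating function of chord diagrams, then there exists a unique formal power series I(x) with I(0) = 0 satisfying A(x) = 1 + I(x·A(x)²). -/
open PowerSeries

/-- Composition `f ∘ g` of formal power series, valid when `g` has zero constant
term: the coefficient of `xⁿ` in `f(g(x))` is `∑_{k ≤ n} f_k [xⁿ] g^k`. -/
noncomputable def substC (g f : PowerSeries ℚ) : PowerSeries ℚ :=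
  PowerSeries.mk fun n =>
    ∑ k ∈ Finset.range (n + 1), (coeff k f) * (coeff n (g ^ k))

/-- The OGF of chord diagrams, `A(x) = ∑ (2n-1)!! xⁿ` (with `(-1)!! = 1`). -/
noncomputable def A : PowerSeries ℚ :=
  PowerSeries.mk fun n => (Nat.doubleFactorial (2 * n - 1) : ℚ)

lemma constA : constantCoeff A = 1 := by
  simp [A, ← coeff_zero_eq_constantCoeff, Nat.doubleFactorial]

lemma coeff_g_pow_self (n : ℕ) :
    coeff n ((PowerSeries.X * A ^ 2) ^ n) = 1 := by
  rw [mul_pow]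
  have h := PowerSeries.coeff_X_pow_mul ((A ^ 2 : PowerSeries ℚ) ^ n) n 0
  rw [zero_add] at h
  rw [h]
  simp [← pow_mul, coeff_zero_eq_constantCoeff, map_pow, constA]

lemma coeff_g_pow_zero {n k : ℕ} (h : n < k) :
    coeff n ((PowerSeries.X * A ^ 2) ^ k) = 0 := by
  have hdvd : (PowerSeries.X : PowerSeries ℚ) ^ k ∣ (PowerSeries.X * A ^ 2) ^ k :=
    pow_dvd_pow_of_dvd (Dvd.intro _ rfl) k
  exact (PowerSeries.X_pow_dvd_iff.mp hdvd) n h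

lemma coeff_substC (g f : PowerSeries ℚ) (n : ℕ) :
    coeff n (substC g f) =
      ∑ k ∈ Finset.range (n + 1), (coeff k f) * (coeff n (g ^ k)) := by
  simp [substC]

noncomputable def Icoef : ℕ → ℚ
  | 0 => 0
  | n + 1 => coeff (n + 1) A - ∑ k ∈ (Finset.range (n + 1)).attach,
      Icoef k.1 * coeff (n + 1) ((PowerSeries.X * A ^ 2) ^ k.1)
  decreasing_by exact Finset.mem_range.mp k.2

lemma Icoef_succ (n : ℕ) :
    Icoef (n + 1) = coeff (n + 1) A - ∑ k ∈ Finset.range (n + 1),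
      Icoef k * coeff (n + 1) ((PowerSeries.X * A ^ 2) ^ k) := by
  rw [Icoef, ← Finset.sum_attach (Finset.range (n + 1))
    (fun k => Icoef k * coeff (n + 1) ((PowerSeries.X * A ^ 2) ^ k))]

lemma sat_iff (I : PowerSeries ℚ) :
    (constantCoeff I = 0 ∧ A = 1 + substC (PowerSeries.X * A ^ 2) I) ↔
      ∀ n, coeff n I = Icoef n := by
  constructor
  · rintro ⟨h0, heq⟩ n
    induction n using Nat.strong_induction_on with
    | _ n ih =>
      match n with
      | 0 => simpa [Icoef, ← coeff_zero_eq_constantCoeff] using h0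
      | n + 1 =>
        have h := congrArg (coeff (n + 1)) heq
        rw [map_add, coeff_substC, Finset.sum_range_succ, coeff_g_pow_self,
          mul_one] at h
        have h1 : coeff (n + 1) (1 : PowerSeries ℚ) = 0 := by
          simp [coeff_one]
        rw [h1, zero_add] at h
        rw [Icoef_succ]
        have hsum : ∑ k ∈ Finset.range (n + 1),
            coeff k I * coeff (n + 1) ((PowerSeries.X * A ^ 2) ^ k) =
            ∑ k ∈ Finset.range (n + 1),
            Icoef k * coeff (n + 1) ((PowerSeries.X * A ^ 2) ^ k) := by
          refine Finset.sum_congr rfl fun k hk => ?_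
          have hk' := Finset.mem_range.mp hk
          rw [ih k (by omega)]
        linarith [h, hsum.symm ▸ h]
  · intro h
    have h0 : constantCoeff I = 0 := by
      rw [← coeff_zero_eq_constantCoeff_apply, h 0, Icoef]
    refine ⟨h0, ?_⟩
    ext n
    match n with
    | 0 =>
      rw [map_add, coeff_substC]
      simp only [zero_add, Finset.range_one, Finset.sum_singleton, pow_zero]
      rw [h 0]
      simp [Icoef, coeff_zero_eq_constantCoeff, constA, coeff_one]
    | n + 1 =>
      rw [map_add, coeff_substC, Finset.sum_range_succ, coeff_g_pow_self, mul_one,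
        h (n + 1), Icoef_succ]
      have h1 : coeff (n + 1) (1 : PowerSeries ℚ) = 0 := by simp [coeff_one]
      rw [h1, zero_add]
      have : ∑ k ∈ Finset.range (n + 1),
          coeff k I * coeff (n + 1) ((PowerSeries.X * A ^ 2) ^ k) =
          ∑ k ∈ Finset.range (n + 1),
          Icoef k * coeff (n + 1) ((PowerSeries.X * A ^ 2) ^ k) := by
        exact Finset.sum_congr rfl fun k _ => by rw [h k]
      rw [this]; ring

theorem connected_chord_diagrams_exist_unique :
    ∃! I : PowerSeries ℚ,
      constantCoeff I = 0 ∧ A = 1 + substC (PowerSeries.X * A ^ 2) I := by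
  refine ⟨PowerSeries.mk Icoef, (sat_iff _).mpr (by simp), fun J hJ => ?_⟩
  have hJ' := (sat_iff J).mp hJ
  ext n
  rw [hJ' n, coeff_mk]
end

section
/- The exponential generating function of strongly connected digraphs has radius of convergence 0, but the sequence scd_n / 2^{n(n−1)} → 1 as n → ∞: the probability that a uniformly random labelled digraph on n vertices is strongly connected tends to 1. -/
/-- A labelled digraph on `Fin n`: a set of ordered pairs `(u,v)` with `u ≠ v`. -/
abbrev Dgr (n : ℕ) := {f : Fin n → Fin n → Bool // ∀ v, f v v = false}

/-- Reachability in a digraph. -/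
def Reach {n : ℕ} (D : Dgr n) : Fin n → Fin n → Prop :=
  Relation.ReflTransGen (fun a b => D.1 a b = true)

/-- The mutual-reachability equivalence relation. -/
def sccSetoid {n : ℕ} (D : Dgr n) : Setoid (Fin n) where
  r u v := Reach D u v ∧ Reach D v u
  iseqv := ⟨fun _ => ⟨.refl, .refl⟩, fun h => ⟨h.2, h.1⟩,
    fun h1 h2 => ⟨h1.1.trans h2.1, h2.2.trans h1.2⟩⟩

/-- The strongly connected components of `D`. -/
def SCC {n : ℕ} (D : Dgr n) := Quotient (sccSetoid D)

/-- The number of strongly connected components of `D`. -/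
noncomputable def sccCount {n : ℕ} (D : Dgr n) : ℕ := Nat.card (SCC D)

/-- `scd m` : the number of strongly connected labelled digraphs on `m` vertices. -/
noncomputable def scd (m : ℕ) : ℕ := Nat.card {D : Dgr m // ∀ u v, Reach D u v}

open Finset Filter

/-- digraphs with no edge from `S` to `Sᶜ` -/
def BadS {n : ℕ} (S : Finset (Fin n)) (D : Dgr n) : Prop :=
  ∀ a ∈ S, ∀ b, b ∉ S → D.1 a b = false

def badEquiv {n : ℕ} (S : Finset (Fin n)) :
    {D : Dgr n // BadS S D} ≃
    ({p : Fin n × Fin n // p.1 ≠ p.2 ∧ ¬(p.1 ∈ S ∧ p.2 ∉ S)} → Bool) where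
  toFun D p := D.1.1 p.1.1 p.1.2
  invFun g := ⟨⟨fun a b => if h : a ≠ b ∧ ¬(a ∈ S ∧ b ∉ S) then g ⟨(a,b), h⟩ else false,
      fun v => by simp⟩, fun a ha b hb => by simp [ha, hb]⟩
  left_inv D := by
    apply Subtype.ext; apply Subtype.ext; funext a b
    show (if h : a ≠ b ∧ ¬(a ∈ S ∧ b ∉ S) then D.1.1 a b else false) = D.1.1 a b
    by_cases h : a ≠ b ∧ ¬(a ∈ S ∧ b ∉ S)
    · simp [h]
    · rw [dif_neg h]
      rcases not_and_or.mp h with h1 | h2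
      · rw [not_not.mp h1]; exact (D.1.2 b).symm
      · obtain ⟨ha, hb⟩ := not_not.mp h2
        exact (D.2 a ha b hb).symm
  right_inv g := by funext p; simp [p.2]

theorem card_badS {n : ℕ} (S : Finset (Fin n)) :
    Nat.card {D : Dgr n // BadS S D} = 2 ^ (n * (n-1) - S.card * (n - S.card)) := by
  classical
  rw [Nat.card_congr (badEquiv S), Nat.card_eq_fintype_card, Fintype.card_fun,
    Fintype.card_bool, Fintype.card_subtype]
  congr 1
  have he : (univ.filter fun p : Fin n × Fin n => p.1 ≠ p.2 ∧ ¬(p.1 ∈ S ∧ p.2 ∉ S))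
      = univ.offDiag \ S ×ˢ Sᶜ := by
    ext p
    simp [Finset.mem_offDiag, Finset.mem_sdiff, Finset.mem_product, and_comm]
  have hsub : S ×ˢ Sᶜ ⊆ univ.offDiag := by
    intro p hp
    rw [Finset.mem_product] at hp
    simp only [Finset.mem_offDiag, Finset.mem_univ, true_and]
    exact fun hpe => (Finset.mem_compl.mp hp.2) (hpe ▸ hp.1)
  rw [he, Finset.card_sdiff_of_subset hsub, Finset.offDiag_card, Finset.card_product,
    Finset.card_compl]
  simp only [Finset.card_univ, Fintype.card_fin]
  rw [show n * (n-1) = n * n - n from by rw [Nat.mul_sub, mul_one]]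

theorem card_dgr (n : ℕ) : Nat.card (Dgr n) = 2 ^ (n * (n-1)) := by
  classical
  have e : Dgr n ≃ ({p : Fin n × Fin n // p.1 ≠ p.2} → Bool) :=
  { toFun := fun D p => D.1 p.1.1 p.1.2
    invFun := fun g => ⟨fun a b => if h : a ≠ b then g ⟨(a,b), h⟩ else false, fun v => by simp⟩
    left_inv := fun D => by
      apply Subtype.ext; funext a b
      show (if h : a ≠ b then D.1 a b else false) = D.1 a b
      by_cases h : a ≠ b
      · simp [h]
      · rw [dif_neg h, not_not.mp h]; exact (D.2 b).symm
    right_inv := fun g => by funext p; simp [p.2] }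
  rw [Nat.card_congr e, Nat.card_eq_fintype_card, Fintype.card_fun, Fintype.card_bool,
    Fintype.card_subtype]
  congr 1
  have he : (univ.filter fun p : Fin n × Fin n => p.1 ≠ p.2) = univ.offDiag := by
    ext p; simp [Finset.mem_offDiag]
  rw [he, Finset.offDiag_card]
  simp only [Finset.card_univ, Fintype.card_fin]
  rw [Nat.mul_sub, mul_one]

theorem bad_card_le (n : ℕ) :
    Nat.card {D : Dgr n // ¬ ∀ u v, Reach D u v} ≤
      ∑ k ∈ Finset.Ico 1 n, n.choose k * 2 ^ (n*(n-1) - k*(n-k)) := by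
  classical
  rw [Nat.card_eq_fintype_card, Fintype.card_subtype]
  set T := univ.powerset.filter (fun S : Finset (Fin n) => S.Nonempty ∧ S ≠ univ) with hT
  have hsub : (univ.filter fun D : Dgr n => ¬ ∀ u v, Reach D u v) ⊆
      T.biUnion (fun S => univ.filter (fun D => BadS S D)) := by
    intro D hD
    rw [Finset.mem_filter] at hD
    have h2 := hD.2
    push_neg at h2
    obtain ⟨u, v, huv⟩ := h2
    refine Finset.mem_biUnion.mpr ⟨univ.filter (fun w => Reach D u w), ?_, ?_⟩
    · rw [hT, Finset.mem_filter]
      refine ⟨Finset.mem_powerset.mpr (Finset.subset_univ _),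
        ⟨u, Finset.mem_filter.mpr ⟨Finset.mem_univ u, Relation.ReflTransGen.refl⟩⟩, ?_⟩
      intro hEq
      have hv : v ∈ univ.filter (fun w => Reach D u w) := by rw [hEq]; exact Finset.mem_univ v
      exact huv ((Finset.mem_filter.mp hv).2)
    · rw [Finset.mem_filter]
      refine ⟨Finset.mem_univ _, fun a ha b hb => ?_⟩
      rw [Finset.mem_filter] at ha
      by_contra hcon
      have hab : D.1 a b = true := by cases h : D.1 a b <;> simp_all
      exact hb (Finset.mem_filter.mpr ⟨Finset.mem_univ b, ha.2.tail hab⟩)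
  have step1 : (univ.filter fun D : Dgr n => ¬ ∀ u v, Reach D u v).card ≤
      ∑ S ∈ T, 2 ^ (n*(n-1) - S.card * (n - S.card)) := by
    refine le_trans (le_trans (Finset.card_le_card hsub) (Finset.card_biUnion_le)) ?_
    refine Finset.sum_le_sum (fun S _ => ?_)
    rw [← Fintype.card_subtype, ← Nat.card_eq_fintype_card, card_badS]
  refine step1.trans ?_
  have hTsub : T ⊆ (Finset.Ico 1 n).biUnion (fun k => Finset.powersetCard k univ) := by
    intro S hS
    rw [hT, Finset.mem_filter] at hS
    refine Finset.mem_biUnion.mpr ⟨S.card, Finset.mem_Ico.mpr ⟨Finset.card_pos.mpr hS.2.1, ?_⟩,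
      Finset.mem_powersetCard.mpr ⟨Finset.subset_univ _, rfl⟩⟩
    have : S ⊂ univ := Finset.ssubset_univ_iff.mpr hS.2.2
    simpa using Finset.card_lt_card this
  refine le_trans (Finset.sum_le_sum_of_subset hTsub) ?_
  rw [Finset.sum_biUnion]
  · refine le_of_eq (Finset.sum_congr rfl (fun k _ => ?_))
    rw [Finset.sum_congr rfl (fun S hS => by
      rw [(Finset.mem_powersetCard.mp hS).2]), Finset.sum_const, Finset.card_powersetCard]
    simp [Finset.card_univ, mul_comm]
  · intro k hk l hl hkl
    simp only [Function.onFun]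
    refine Finset.disjoint_left.mpr (fun S hSk hSl => hkl ?_)
    rw [← (Finset.mem_powersetCard.mp hSk).2, ← (Finset.mem_powersetCard.mp hSl).2]

theorem scd_add_bad (n : ℕ) :
    scd n + Nat.card {D : Dgr n // ¬ ∀ u v, Reach D u v} = 2 ^ (n * (n-1)) := by
  classical
  rw [scd, Nat.card_eq_fintype_card, Nat.card_eq_fintype_card, Fintype.card_subtype,
    Fintype.card_subtype, ← card_dgr n, Nat.card_eq_fintype_card, ← Finset.card_univ]
  exact Finset.card_filter_add_card_filter_not _

theorem sum_bound_tendsto :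
    Tendsto (fun n : ℕ => ∑ k ∈ Finset.Ico 1 n, (n.choose k : ℝ) * (1/2)^(k*(n-k)))
      atTop (nhds 0) := by
  set s : ℝ := Real.sqrt (1/2) with hs
  have hs0 : 0 ≤ s := Real.sqrt_nonneg _
  have hs2 : s^2 = 1/2 := Real.sq_sqrt (by norm_num)
  have hs1 : s < 1 := by nlinarith
  have h0 : Tendsto (fun n : ℕ => (n:ℝ)^2 * s^n) atTop (nhds 0) :=
    tendsto_pow_const_mul_const_pow_of_lt_one 2 hs0 hs1
  have h1 : Tendsto (fun n : ℕ => (n:ℝ) * s^n) atTop (nhds 0) := by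
    simpa using tendsto_pow_const_mul_const_pow_of_lt_one 1 hs0 hs1
  have hnonneg : ∀ n : ℕ, 0 ≤ ∑ k ∈ Finset.Ico 1 n, (n.choose k : ℝ) * (1/2)^(k*(n-k)) :=
    fun n => Finset.sum_nonneg fun k _ => by positivity
  refine tendsto_of_tendsto_of_tendsto_of_le_of_le' tendsto_const_nhds h0
    (Eventually.of_forall hnonneg) ?_
  filter_upwards [h1.eventually_le_const (by norm_num : (0:ℝ) < 1)] with n hns
  have key : ∀ k ∈ Finset.Ico 1 n, (n.choose k : ℝ) * (1/2)^(k*(n-k)) ≤ (n:ℝ) * s^n := by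
    intro k hk
    rw [Finset.mem_Ico] at hk
    obtain ⟨hk1, hkn⟩ := hk
    set m := min k (n-k) with hm
    have hm1 : 1 ≤ m := le_min hk1 (by omega)
    have h2m : 2*m ≤ n := by omega
    have hchoose : n.choose k = n.choose m := by
      rcases le_total k (n-k) with h | h
      · rw [hm, min_eq_left h]
      · rw [hm, min_eq_right h, ← Nat.choose_symm hkn.le]
    have hprod : k*(n-k) = m*(n-m) := by
      rcases le_total k (n-k) with h | h
      · rw [hm, min_eq_left h]
      · rw [hm, min_eq_right h, Nat.sub_sub_self hkn.le, mul_comm]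
    rw [hchoose, hprod]
    have step1 : (n.choose m : ℝ) ≤ (n:ℝ)^m := by
      exact_mod_cast Nat.cast_le.mpr (Nat.choose_le_pow n m)
    have step2 : ((1:ℝ)/2)^(m*(n-m)) = ((1/2 : ℝ)^(n-m))^m := by
      rw [← pow_mul, mul_comm]
    have step3 : ((1:ℝ)/2)^(n-m) ≤ s^n := by
      have : ((1:ℝ)/2)^(n-m) = s^(2*(n-m)) := by rw [pow_mul, hs2]
      rw [this]
      exact pow_le_pow_of_le_one hs0 hs1.le (by omega)
    calc (n.choose m : ℝ) * (1/2)^(m*(n-m))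
        ≤ (n:ℝ)^m * ((1/2:ℝ)^(n-m))^m := by
          refine mul_le_mul step1 ?_ (by positivity) (by positivity)
          rw [step2]
      _ ≤ (n:ℝ)^m * (s^n)^m := by
          refine mul_le_mul_of_nonneg_left (pow_le_pow_left₀ (by positivity) step3 m)
            (by positivity)
      _ = ((n:ℝ) * s^n)^m := by rw [mul_pow]
      _ ≤ ((n:ℝ) * s^n)^1 := pow_le_pow_of_le_one (by positivity) hns hm1
      _ = (n:ℝ) * s^n := pow_one _
  calc ∑ k ∈ Finset.Ico 1 n, (n.choose k : ℝ) * (1/2)^(k*(n-k))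
      ≤ ∑ _k ∈ Finset.Ico 1 n, (n:ℝ) * s^n := Finset.sum_le_sum key
    _ = ((n-1 : ℕ) : ℝ) * ((n:ℝ) * s^n) := by rw [Finset.sum_const, Nat.card_Ico]; simp
    _ ≤ (n:ℝ) * ((n:ℝ) * s^n) := by
        refine mul_le_mul_of_nonneg_right ?_ (by positivity)
        exact_mod_cast Nat.cast_le.mpr (Nat.sub_le n 1)
    _ = (n:ℝ)^2 * s^n := by ring

theorem bad_ratio_tendsto :
    Tendsto (fun n : ℕ =>
      (Nat.card {D : Dgr n // ¬ ∀ u v, Reach D u v} : ℝ) / 2 ^ (n * (n-1)))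
      atTop (nhds 0) := by
  refine tendsto_of_tendsto_of_tendsto_of_le_of_le' tendsto_const_nhds sum_bound_tendsto
    (Eventually.of_forall fun n => by positivity) (Eventually.of_forall fun n => ?_)
  have h1 : (Nat.card {D : Dgr n // ¬ ∀ u v, Reach D u v} : ℝ) ≤
      ∑ k ∈ Finset.Ico 1 n, (n.choose k : ℝ) * 2 ^ (n*(n-1) - k*(n-k)) := by
    have := bad_card_le n
    calc (Nat.card {D : Dgr n // ¬ ∀ u v, Reach D u v} : ℝ)
        ≤ ((∑ k ∈ Finset.Ico 1 n, n.choose k * 2 ^ (n*(n-1) - k*(n-k)) : ℕ) : ℝ) := by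
          exact_mod_cast this
      _ = _ := by push_cast; ring_nf
  rw [div_le_iff₀ (by positivity)]
  refine h1.trans (le_of_eq ?_)
  rw [Finset.sum_mul]
  refine Finset.sum_congr rfl (fun k hk => ?_)
  rw [Finset.mem_Ico] at hk
  have hle : k*(n-k) ≤ n*(n-1) :=
    Nat.mul_le_mul hk.2.le (Nat.sub_le_sub_left hk.1 n)
  have key2 : ((1:ℝ)/2)^(k*(n-k)) * 2^(n*(n-1)) = 2^(n*(n-1) - k*(n-k)) := by
    have h2 : (2:ℝ)^(n*(n-1) - k*(n-k)) * 2^(k*(n-k)) = 2^(n*(n-1)) := by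
      rw [← pow_add, Nat.sub_add_cancel hle]
    rw [div_pow, one_pow, div_mul_eq_mul_div, div_eq_iff (by positivity : (2:ℝ)^(k*(n-k)) ≠ 0)]
    linarith [h2]
  rw [mul_assoc, key2]

theorem scd_ratio_tendsto :
    Tendsto (fun n : ℕ => (scd n : ℝ) / 2 ^ (n * (n - 1))) atTop (nhds 1) := by
  have key : ∀ n : ℕ, (scd n : ℝ) / 2 ^ (n * (n-1)) =
      1 - (Nat.card {D : Dgr n // ¬ ∀ u v, Reach D u v} : ℝ) / 2 ^ (n * (n-1)) := by
    intro n
    have h := scd_add_bad n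
    have h' : (scd n : ℝ) + (Nat.card {D : Dgr n // ¬ ∀ u v, Reach D u v} : ℝ)
        = 2 ^ (n * (n-1)) := by exact_mod_cast congrArg (Nat.cast : ℕ → ℝ) h
    have hp : (2:ℝ) ^ (n * (n-1)) ≠ 0 := by positivity
    rw [eq_sub_iff_add_eq, ← add_div, h', div_self hp]
  simp_rw [key]
  simpa using tendsto_const_nhds.sub bad_ratio_tendsto

open Filter in
theorem scd_egf_divergent_and_density_one :
    (∀ r : ℝ, 0 < r →
      ¬ Summable (fun n : ℕ => (scd n : ℝ) / (n.factorial : ℝ) * r ^ n)) ∧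
    Tendsto (fun n : ℕ => (scd n : ℝ) / 2 ^ (n * (n - 1))) atTop (nhds 1) := by
  refine ⟨?_, scd_ratio_tendsto⟩
  intro r hr hsum
  have hlt := hsum.tendsto_atTop_zero.eventually_lt_const (by norm_num : (0:ℝ) < 1)
  have hratio := scd_ratio_tendsto.eventually_const_le (by norm_num : (1/2:ℝ) < 1)
  have hpow : Tendsto (fun n : ℕ => (n:ℝ) * (1/2)^n) atTop (nhds 0) := by
    simpa using tendsto_pow_const_mul_const_pow_of_lt_one 1 (by norm_num)
      (by norm_num : (1/2:ℝ) < 1)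
  have hsmall := hpow.eventually_lt_const (by positivity : (0:ℝ) < r/4)
  have hN : ∀ᶠ n : ℕ in atTop, 1 ≤ n := eventually_ge_atTop 1
  obtain ⟨n, ⟨⟨hfn, hhalf⟩, hsm⟩, hn1⟩ := (((hlt.and hratio).and hsmall).and hN).exists
  have hfn' : (scd n : ℝ) / (n.factorial : ℝ) * r ^ n < 1 := hfn
  have hhalf' : (1:ℝ)/2 ≤ (scd n : ℝ) / 2 ^ (n * (n-1)) := hhalf
  have hsm' : (n:ℝ) * (1/2)^n < r/4 := hsm
  have hEpos : (0:ℝ) < 2 ^ (n*(n-1)) := by positivity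
  have h2n : 2*(n:ℝ) ≤ 2^(n-1) * r := by
    have hxp : (2:ℝ)^n = 2 * 2^(n-1) := by
      rw [← pow_succ']; congr 1; omega
    have hpos : (0:ℝ) < 2^n := by positivity
    have hhalfpow : ((1:ℝ)/2)^n = 1/2^n := by rw [div_pow, one_pow]
    rw [hhalfpow] at hsm'
    have h4 : 4*(n:ℝ) < r * 2^n := by
      rw [mul_one_div] at hsm'
      have := (div_lt_iff₀ hpos).mp hsm'
      nlinarith [this]
    rw [hxp] at h4
    nlinarith [h4]
  have hscd : (2:ℝ)^(n*(n-1)) * (1/2) ≤ (scd n : ℝ) := by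
    have := (le_div_iff₀ hEpos).mp hhalf'
    linarith
  have hfact : (n.factorial : ℝ) ≤ (n:ℝ)^n := by exact_mod_cast Nat.factorial_le_pow n
  have hA : ((2:ℝ)*n)^n ≤ ((2:ℝ)^(n-1) * r)^n :=
    pow_le_pow_left₀ (by positivity) h2n n
  have hB : ((2:ℝ)*n)^n = 2^n * (n:ℝ)^n := mul_pow _ _ _
  have hC : ((2:ℝ)^(n-1) * r)^n = 2^(n*(n-1)) * r^n := by
    rw [mul_pow, ← pow_mul, mul_comm (n-1) n]
  have h2nge : (2:ℝ) ≤ 2^n := by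
    calc (2:ℝ) = 2^1 := (pow_one 2).symm
      _ ≤ 2^n := pow_le_pow_right₀ one_le_two hn1
  have hnn : (0:ℝ) ≤ (n:ℝ)^n := by positivity
  have hstep : (n.factorial : ℝ) ≤ (scd n : ℝ) * r^n := by
    have hmul := mul_le_mul_of_nonneg_right hscd (pow_nonneg hr.le n)
    have h2' : 2*(n:ℝ)^n ≤ 2^n * (n:ℝ)^n := mul_le_mul_of_nonneg_right h2nge hnn
    calc (n.factorial : ℝ) ≤ (n:ℝ)^n := hfact
      _ ≤ (2^n * (n:ℝ)^n)/2 := by linarith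
      _ = ((2:ℝ)*n)^n/2 := by rw [hB]
      _ ≤ ((2:ℝ)^(n-1) * r)^n/2 := by linarith
      _ = 2^(n*(n-1)) * r^n/2 := by rw [hC]
      _ ≤ (scd n : ℝ) * r^n := by linarith
  have hone : (1:ℝ) ≤ (scd n : ℝ) / (n.factorial : ℝ) * r ^ n := by
    rw [div_mul_eq_mul_div, le_div_iff₀
      (by exact_mod_cast n.factorial_pos : (0:ℝ) < (n.factorial : ℝ)), one_mul]
    exact hstep
  linarith
end
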